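/- The number of plane trees on n edges with root degree r equals (r/n)*C(2n-1-r, n-1), for n >= r >= 1. -/
import Mathlib


inductive PlaneTree : Type
  | node : List PlaneTree → PlaneTree

namespace PlaneTree

def edges : PlaneTree → ℕ
  | node ts => (ts.attach.map (fun t => edges t.1)).sum + ts.length
decreasing_by have := List.sizeOf_lt_of_mem t.2; simp [PlaneTree.node.sizeOf_spec]; omega

def leafAux : PlaneTree → ℕ
  | node ts => (if ts.length = 0 then 1 else 0) + (ts.attach.map (fun t => leafAux t.1)).sum
decreasing_by have := List.sizeOf_lt_of_mem t.2; simp [PlaneTree.node.sizeOf_spec]; omega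

def internalAux : PlaneTree → ℕ
  | node ts => (if ts.length = 1 then 1 else 0) + (ts.attach.map (fun t => internalAux t.1)).sum
decreasing_by have := List.sizeOf_lt_of_mem t.2; simp [PlaneTree.node.sizeOf_spec]; omega

/-- number of leaves: non-root vertices of down degree 0 -/
def leaves : PlaneTree → ℕ
  | node ts => (ts.map leafAux).sum

/-- number of internal nodes: non-root vertices of down degree 1 -/
def internals : PlaneTree → ℕ
  | node ts => (ts.map internalAux).sum

def rootDegree : PlaneTree → ℕ
  | node ts => ts.length

end PlaneTree

namespace PlaneTree

lemma edges_node (ts : List PlaneTree) : edges (node ts) = (ts.map edges).sum + ts.length := by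
  rw [edges]; congr 1; simp
lemma edges_eq_zero {t : PlaneTree} (h : t.edges = 0) : t = node [] := by
  obtain ⟨ts⟩ := t
  rw [edges_node] at h
  have : ts.length = 0 := by omega
  simp [List.length_eq_zero_iff] at this
  subst this; rfl
lemma rootDegree_le_edges (t : PlaneTree) : t.rootDegree ≤ t.edges := by
  obtain ⟨ts⟩ := t; rw [edges_node, rootDegree]; omega
def children : PlaneTree → List PlaneTree
  | node ts => ts
def addLeaf : PlaneTree → PlaneTree
  | node ts => node (node [] :: ts)
def rotate : PlaneTree → PlaneTree
  | node (a :: node bs :: rest) => node (node (a :: bs) :: rest)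
  | t => t
lemma edges_addLeaf (t : PlaneTree) : (addLeaf t).edges = t.edges + 1 := by
  obtain ⟨ts⟩ := t; simp [addLeaf, edges_node]; omega
lemma rootDegree_addLeaf (t : PlaneTree) : (addLeaf t).rootDegree = t.rootDegree + 1 := by
  obtain ⟨ts⟩ := t; simp [addLeaf, rootDegree]
lemma rotate_cons (a b : PlaneTree) (rest : List PlaneTree) :
    rotate (node (a :: b :: rest)) = node (node (a :: b.children) :: rest) := by
  obtain ⟨bs⟩ := b; rfl
lemma rotate_spec {t : PlaneTree} (h : 2 ≤ t.rootDegree) :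
    (rotate t).edges = t.edges ∧ (rotate t).rootDegree = t.rootDegree - 1 := by
  obtain ⟨ts⟩ := t
  rw [rootDegree] at h
  match ts, h with
  | a :: b :: rest, _ =>
    obtain ⟨bs⟩ := b
    rw [rotate_cons]
    constructor
    · simp [edges_node, children]; omega
    · simp [rootDegree]
lemma addLeaf_inj {s t : PlaneTree} (h : addLeaf s = addLeaf t) : s = t := by
  obtain ⟨ss⟩ := s; obtain ⟨ts⟩ := t
  simp [addLeaf] at h; simp [h]
lemma rotate_inj {s t : PlaneTree} (hs : 2 ≤ s.rootDegree) (ht : 2 ≤ t.rootDegree)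
    (h : rotate s = rotate t) : s = t := by
  obtain ⟨ss⟩ := s; obtain ⟨ts⟩ := t
  rw [rootDegree] at hs ht
  match ss, hs, ts, ht with
  | a :: b :: rest, _, a' :: b' :: rest', _ =>
    obtain ⟨bs⟩ := b; obtain ⟨bs'⟩ := b'
    rw [rotate_cons, rotate_cons] at h
    simp [children] at h
    obtain ⟨⟨h1, h2⟩, h3⟩ := h
    simp [h1, h2, h3]
lemma addLeaf_ne_rotate {s t : PlaneTree} (ht : 2 ≤ t.rootDegree) :
    addLeaf s ≠ rotate t := by
  obtain ⟨ss⟩ := s; obtain ⟨ts⟩ := t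
  rw [rootDegree] at ht
  match ts, ht with
  | a :: b :: rest, _ =>
    obtain ⟨bs⟩ := b
    rw [rotate_cons]
    simp [addLeaf, children]

end PlaneTree

open PlaneTree in
def cnt : ℕ → ℕ → ℕ
  | n, r =>
    if r = 0 then (if n = 0 then 1 else 0)
    else if n < r then 0
    else cnt (n-1) (r-1) + cnt n (r+1)
termination_by n r => 2*n - r
decreasing_by all_goals omega

abbrev PT (n r : ℕ) : Type := {T : PlaneTree // T.edges = n ∧ T.rootDegree = r}

open PlaneTree in
theorem finite_and_card (n r : ℕ) : Finite (PT n r) ∧ Nat.card (PT n r) = cnt n r := by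
  rw [cnt]
  by_cases h0 : r = 0
  · subst h0
    simp only [if_pos rfl]
    by_cases hn : n = 0
    · subst hn
      have hu : ∀ x : PT 0 0, x = ⟨node [], by simp [edges_node, rootDegree]⟩ := by
        rintro ⟨t, h1, h2⟩
        have := edges_eq_zero h1
        subst this; rfl
      have : Unique (PT 0 0) := ⟨⟨_⟩, hu⟩
      exact ⟨inferInstance, by simp [Nat.card_unique]⟩
    · have : IsEmpty (PT n 0) := by
        constructor; rintro ⟨t, h1, h2⟩
        obtain ⟨ts⟩ := t
        rw [rootDegree] at h2
        rw [edges_node] at h1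
        simp [List.length_eq_zero_iff] at h2
        subst h2; simp at h1; omega
      exact ⟨inferInstance, by simp [hn, Nat.card_of_isEmpty]⟩
  · rw [if_neg h0]
    by_cases hlt : n < r
    · have : IsEmpty (PT n r) := by
        constructor; rintro ⟨t, h1, h2⟩
        have := rootDegree_le_edges t
        omega
      exact ⟨inferInstance, by simp [hlt, Nat.card_of_isEmpty]⟩
    · rw [if_neg hlt]
      have hr : 1 ≤ r := by omega
      have hrn : r ≤ n := by omega
      obtain ⟨F1, C1⟩ := finite_and_card (n-1) (r-1)
      obtain ⟨F2, C2⟩ := finite_and_card n (r+1)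
      -- the bijection
      have key : ∃ f : (PT (n-1) (r-1) ⊕ PT n (r+1)) → PT n r, Function.Bijective f := by
        refine ⟨Sum.elim
          (fun x => ⟨addLeaf x.1, by
            have h1 := edges_addLeaf x.1
            have h2 := rootDegree_addLeaf x.1
            have := x.2.1; have := x.2.2
            constructor <;> omega⟩)
          (fun x => ⟨rotate x.1, by
            have hd : 2 ≤ x.1.rootDegree := by have := x.2.2; omega
            have := rotate_spec hd
            have := x.2.1; have := x.2.2
            constructor <;> omega⟩), ?_, ?_⟩
        · rintro (x | x) (y | y) h <;> simp only [Sum.elim_inl, Sum.elim_inr, Subtype.mk.injEq] at h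
          · exact congrArg Sum.inl (Subtype.ext (addLeaf_inj h))
          · exact absurd h (addLeaf_ne_rotate (by have := y.2.2; omega))
          · exact absurd h.symm (addLeaf_ne_rotate (by have := x.2.2; omega))
          · exact congrArg Sum.inr (Subtype.ext (rotate_inj
              (by have := x.2.2; omega) (by have := y.2.2; omega) h))
        · rintro ⟨t, h1, h2⟩
          obtain ⟨ts⟩ := t
          rw [rootDegree] at h2
          match ts, hr, h2 with
          | t0 :: rest, _, h2 =>
            obtain ⟨cs⟩ := t0
            match cs with
            | [] =>
              refine ⟨Sum.inl ⟨node rest, ?_, ?_⟩, ?_⟩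
              · rw [edges_node] at h1 ⊢
                simp [edges_node] at h1
                simp at h2
                omega
              · rw [rootDegree]; simp at h2; omega
              · simp only [Sum.elim_inl]
                congr 1
            | a :: as =>
              refine ⟨Sum.inr ⟨node (a :: node as :: rest), ?_, ?_⟩, ?_⟩
              · rw [edges_node] at h1 ⊢
                simp [edges_node] at h1 ⊢
                omega
              · rw [rootDegree]; simp at h2 ⊢; omega
              · simp only [Sum.elim_inr]
                apply Subtype.ext
                simp only
                rw [rotate_cons]
                simp [children]
      obtain ⟨f, hf⟩ := key
      have : Finite (PT (n-1) (r-1) ⊕ PT n (r+1)) := by infer_instance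
      have Ffin : Finite (PT n r) := Finite.of_surjective f hf.surjective
      refine ⟨Ffin, ?_⟩
      rw [← Nat.card_eq_of_bijective f hf, Nat.card_sum, C1, C2]
termination_by 2*n - r
decreasing_by all_goals omega
lemma cnt_gt {n r : ℕ} (h : n < r) : cnt n r = 0 := by
  rw [cnt]
  have : ¬ r = 0 := by omega
  rw [if_neg this, if_pos h]

lemma cnt_diag (n : ℕ) : cnt n n = 1 := by
  induction n with
  | zero => rw [cnt]; simp
  | succ m ih =>
    rw [cnt]
    rw [if_neg (by omega), if_neg (by omega)]
    simp [ih, cnt_gt (by omega : m + 1 < m + 2)]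

lemma choose_decr (m k : ℕ) (h : m ≤ 2*k) : m.choose (k+1) ≤ m.choose k := by
  rcases le_or_gt m k with hm | hm
  · simp [Nat.choose_eq_zero_of_lt (by omega : m < k + 1)]
  · have e1 : m.choose (k+1) = m.choose (m - (k+1)) := (Nat.choose_symm hm).symm
    have e2 : m.choose k = m.choose (m - k) := (Nat.choose_symm (le_of_lt hm)).symm
    rw [e1, e2]
    have hx : m - (k+1) < m / 2 := by omega
    have := Nat.choose_le_succ_of_lt_half_left hx
    have e3 : m - (k+1) + 1 = m - k := by omega
    rwa [e3] at this

lemma cnt_eq (n r : ℕ) (hr : 1 ≤ r) (hrn : r ≤ n) :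
    cnt n r = (2*n-1-r).choose (n-1) - (2*n-1-r).choose n := by
  rcases eq_or_lt_of_le hrn with he | hlt
  · subst he
    have e1 : 2*r-1-r = r-1 := by omega
    rw [cnt_diag, e1, Nat.choose_self, Nat.choose_eq_zero_of_lt (by omega)]
  · -- r < n, so n ≥ 2
    have hn2 : 2 ≤ n := by omega
    rw [cnt, if_neg (by omega), if_neg (by omega)]
    have hA : cnt (n-1) (r-1) = (2*n-2-r).choose (n-2) - (2*n-2-r).choose (n-1) := by
      rcases eq_or_lt_of_le hr with h1 | h1
      · -- r = 1
        have : cnt (n-1) 0 = 0 := by rw [cnt]; simp; omega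
        rw [← h1]
        simp only [Nat.sub_self]  -- r - 1 = 0? careful
        rw [this]
        have hs : (2*n-2-1).choose (n-2) = (2*n-2-1).choose (n-1) := by
          have h2 : n - 1 ≤ 2*n-2-1 := by omega
          have h3 : 2*n-2-1 - (n-1) = n - 2 := by omega
          rw [← h3, Nat.choose_symm h2]
        omega
      · have ih := cnt_eq (n-1) (r-1) (by omega) (by omega)
        have e1 : 2*(n-1)-1-(r-1) = 2*n-2-r := by omega
        have e2 : n-1-1 = n-2 := by omega
        rw [ih, e1, e2]
    have hB : cnt n (r+1) = (2*n-2-r).choose (n-1) - (2*n-2-r).choose n := by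
      have ih := cnt_eq n (r+1) (by omega) (by omega)
      have e1 : 2*n-1-(r+1) = 2*n-2-r := by omega
      rw [ih, e1]
    have hP1 : (2*n-1-r).choose (n-1) = (2*n-2-r).choose (n-2) + (2*n-2-r).choose (n-1) := by
      have e1 : 2*n-1-r = (2*n-2-r) + 1 := by omega
      have e2 : n-1 = (n-2) + 1 := by omega
      rw [e1, e2, Nat.choose_succ_succ]
    have hP2 : (2*n-1-r).choose n = (2*n-2-r).choose (n-1) + (2*n-2-r).choose n := by
      obtain ⟨k, hk⟩ : ∃ k, n = k + 1 := ⟨n-1, by omega⟩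
      subst hk
      have e1 : 2*(k+1)-1-r = (2*(k+1)-2-r) + 1 := by omega
      rw [e1, Nat.choose_succ_succ]
      simp
    have h3 : (2*n-2-r).choose n ≤ (2*n-2-r).choose (n-1) := by
      have := choose_decr (2*n-2-r) (n-1) (by omega)
      have e : n - 1 + 1 = n := by omega
      rwa [e] at this
    have h4 : (2*n-2-r).choose (n-1) ≤ (2*n-2-r).choose (n-2) := by
      rcases eq_or_lt_of_le hr with h1 | h1
      · -- r = 1 : equality by symmetry
        have h2 : n - 1 ≤ 2*n-2-r := by omega
        have hs : 2*n-2-r - (n-1) = n - 2 := by omega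
        rw [← hs, Nat.choose_symm h2]
      · have := choose_decr (2*n-2-r) (n-2) (by omega)
        have e : n - 2 + 1 = n - 1 := by omega
        rwa [e] at this
    omega
termination_by 2*n - r
decreasing_by all_goals omega

/-- The number of plane trees on `n` edges with root degree `r`:
`n * T_n(r) = r * C(2n-1-r, n-1)` for `n ≥ r ≥ 1`. -/
theorem planeTree_count_rootDegree (n r : ℕ) (hr : 1 ≤ r) (hrn : r ≤ n) :
    n * Nat.card {T : PlaneTree // T.edges = n ∧ T.rootDegree = r} =
      r * Nat.choose (2 * n - 1 - r) (n - 1) := by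
  have hc := (finite_and_card n r).2
  rw [hc, cnt_eq n r hr hrn]
  rcases eq_or_lt_of_le hrn with he | hlt
  · subst he
    have e1 : 2*r-1-r = r-1 := by omega
    rw [e1, Nat.choose_self, Nat.choose_eq_zero_of_lt (by omega)]
  · set m := 2*n-1-r with hm
    set A := m.choose (n-1) with hA
    set B := m.choose n with hB
    have key : B * n = A * (n - r) := by
      have e2 : n = (n-1) + 1 := by omega
      have := Nat.choose_succ_right_eq m (n-1)
      rw [← e2] at this
      have e3 : m - (n-1) = n - r := by omega
      rw [e3] at this
      exact this
    have hord : B ≤ A := by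
      have := choose_decr m (n-1) (by omega)
      have e : n - 1 + 1 = n := by omega
      rwa [e] at this
    calc n * (A - B) = n * A - n * B := by rw [Nat.mul_sub]
      _ = n * A - (n - r) * A := by rw [mul_comm n B, key, mul_comm A (n-r)]
      _ = (n - (n - r)) * A := (Nat.sub_mul n (n-r) A).symm
      _ = r * A := by congr 1; omega
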